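/- Let k, m, n be positive integers, let π = (P_1,...,P_m) be a partition of [n] in which each P_i is a set of |P_i| consecutive integers, and let s = (s_1,...,s_m) be a vector of positive integers with k ≤ s_1 + ... + s_m. If X ∈ {+1, 0, −1}^n is nonzero and alt_I(X) ≥ M_{2,π} (where I is the identity permutation), then the set X^{+1} = {i : x_i = +1} or the set X^{−1} = {i : x_i = −1} contains a k-subset A of [n] with |A ∩ P_i| ≤ s_i for all i, i.e. a vertex of KG^2(π; s; k). -/

import Mathlib

open Finset

/-- A proper `t`-coloring of the Kneser hypergraph `KG^r(F)`: vertices are the members of `F`,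
colors are taken in `{1,...,t}`, and no set of `r` pairwise disjoint members of `F`
(an edge) is monochromatic. -/
def IsKneserColoring (n r t : ℕ) (F : Finset (Finset (Fin n)))
    (c : Finset (Fin n) → ℕ) : Prop :=
  (∀ A ∈ F, c A ∈ Finset.Icc 1 t) ∧
    ∀ E : Finset (Finset (Fin n)), E ⊆ F → E.card = r →
      ((E : Set (Finset (Fin n))).Pairwise fun A B => Disjoint A B) →
      ¬ ∃ i, ∀ A ∈ E, c A = i

/-- The chromatic number of the Kneser hypergraph `KG^r(F)`. -/
noncomputable def kneserChrom (n r : ℕ) (F : Finset (Finset (Fin n))) : ℕ :=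
  sInf {t | ∃ c, IsKneserColoring n r t F c}

/-- `P` is a partition of `[n]` (identified with `Fin n`) into `m` blocks. -/
def IsPartition (n m : ℕ) (P : Fin m → Finset (Fin n)) : Prop :=
  (∀ i, (P i).Nonempty) ∧ (∀ i j, i ≠ j → Disjoint (P i) (P j)) ∧
    ∀ a : Fin n, ∃ i, a ∈ P i

open Classical in
/-- The vertex set of the multiple Kneser hypergraph `KG^r(π; s; k)`:
all `k`-subsets `A` of `[n]` with `|A ∩ P i| ≤ s i` for all `i`. -/
noncomputable def multiKneserVerts (n m k : ℕ) (P : Fin m → Finset (Fin n))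
    (s : Fin m → ℕ) : Finset (Finset (Fin n)) :=
  Finset.univ.filter fun A => A.card = k ∧ ∀ i, (A ∩ P i).card ≤ s i

/-- `f_{r,π}(P i) = r * s i` if `|P i| ≥ r * s i`, and `|P i|` otherwise. -/
def frpi (n m r : ℕ) (P : Fin m → Finset (Fin n)) (s : Fin m → ℕ) (i : Fin m) : ℕ :=
  if r * s i ≤ (P i).card then r * s i else (P i).card

/-- `M_{r,π}`: the maximum, over all subsets `S ⊆ [m]` with
`∑_{i ∈ S} f_{r,π}(P i) ≤ rk - 1`, of `rk - 1 + ∑_{i ∈ S} (|P i| - f_{r,π}(P i))`. -/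
noncomputable def Mrpi (n m r k : ℕ) (P : Fin m → Finset (Fin n)) (s : Fin m → ℕ) : ℕ :=
  sSup {v | ∃ S : Finset (Fin m), (∑ i ∈ S, frpi n m r P s i) ≤ r * k - 1 ∧
    v = r * k - 1 + ∑ i ∈ S, ((P i).card - frpi n m r P s i)}

/-- `l` is (the index list of) an alternating subsequence of `(X 1, ..., X n)`:
indices are increasing, all chosen entries are nonzero (`≠ none`), and any two
consecutive chosen entries differ. -/
def IsAltList {α : Type*} (n : ℕ) (X : Fin n → Option α) (l : List (Fin n)) : Prop :=
  l.Chain' (· < ·) ∧ (∀ i ∈ l, X i ≠ none) ∧ l.Chain' (fun i j => X i ≠ X j)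

/-- `alt_I(X)`: maximum length of an alternating subsequence of nonzero entries of
`(X 1, ..., X n)` (with respect to the identity permutation). -/
noncomputable def altVecI {α : Type*} (n : ℕ) (X : Fin n → Option α) : ℕ :=
  sSup {k | ∃ l : List (Fin n), IsAltList n X l ∧ l.length = k}


/-- Filtering a sorted list by a "convex" predicate preserves any `Chain'` property. -/
lemma chain'_filter_convex {n : ℕ} {R : Fin n → Fin n → Prop} {p : Fin n → Bool}
    (hconv : ∀ x y z : Fin n, p x → p y → x ≤ z → z ≤ y → p z) :
    ∀ l : List (Fin n), l.Chain' (· < ·) → l.Chain' R → (l.filter p).Chain' R := by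
  intro l
  induction l with
  | nil => simp
  | cons a t ih =>
    intro hlt hR
    rw [List.filter_cons]
    by_cases hpa : p a
    · simp only [hpa, if_true]
      refine List.isChain_cons.mpr ?_
      refine ⟨?_, ih hlt.tail hR.tail⟩
      intro b hb
      have hbmem := List.mem_of_mem_head? hb
      have hbmem' := List.mem_filter.mp hbmem
      match t, hlt, hR with
      | c :: t', hlt, hR =>
        have hac : a < c := (List.isChain_cons_cons.mp hlt).1
        by_cases hpc : p c
        · rw [List.filter_cons, if_pos hpc] at hb
          simp only [List.head?_cons, Option.mem_def, Option.some.injEq] at hb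
          subst hb
          exact (List.isChain_cons_cons.mp hR).1
        · have hbc : b ≠ c := fun h => hpc (h ▸ hbmem'.2)
          have hbt' : b ∈ t' := (List.mem_cons.mp hbmem'.1).resolve_left hbc
          have hcb : c < b := by
            have hpw : (c :: t').Pairwise (· < ·) :=
              List.isChain_iff_pairwise.mp hlt.tail
            exact (List.pairwise_cons.mp hpw).1 b hbt'
          exact absurd (hconv a b c hpa hbmem'.2 hac.le hcb.le) hpc
    · simp only [hpa, if_false, Bool.false_eq_true]
      exact ih hlt.tail hR.tail

/-- Counts of the two signs in an alternating nonzero list. -/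
lemma alt_counts {n : ℕ} (X : Fin n → Option Bool) :
    ∀ l : List (Fin n), l.Chain' (fun i j => X i ≠ X j) → (∀ a ∈ l, X a ≠ none) →
      l.length / 2 ≤ l.countP (fun a => X a = some true) ∧
      l.length / 2 ≤ l.countP (fun a => X a = some false) ∧
      l.countP (fun a => X a = some true) + l.countP (fun a => X a = some false) = l.length
  | [] => by simp
  | [a] => by
    intro _ h2
    have := h2 a (by simp)
    obtain ⟨ba, hba⟩ := Option.ne_none_iff_exists'.mp this
    cases ba <;> simp [List.countP_cons, hba]
  | a :: b :: t => by
    intro h1 h2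
    have hab : X a ≠ X b := (List.isChain_cons_cons.mp h1).1
    obtain ⟨ba, hba⟩ := Option.ne_none_iff_exists'.mp (h2 a (by simp))
    obtain ⟨bb, hbb⟩ := Option.ne_none_iff_exists'.mp (h2 b (by simp))
    have IH := alt_counts X t h1.tail.tail (fun x hx => h2 x (by simp [hx]))
    have hne : ba ≠ bb := by rintro rfl; exact hab (hba.trans hbb.symm)
    cases ba <;> cases bb <;> simp_all [List.countP_cons, hba, hbb] <;> omega

/-- The lengths of filters along a partition sum to the total length. -/
lemma sum_length_filter {n m : ℕ} (P : Fin m → Finset (Fin n))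
    (hdisj : ∀ i j, i ≠ j → Disjoint (P i) (P j)) (hcov : ∀ a, ∃ i, a ∈ P i)
    (l : List (Fin n)) :
    ∑ i, (l.filter (fun a => decide (a ∈ P i))).length = l.length := by
  induction l with
  | nil => simp
  | cons a t ih =>
    have key : ∀ i : Fin m, ((a :: t).filter (fun x => decide (x ∈ P i))).length
        = (t.filter (fun x => decide (x ∈ P i))).length + (if a ∈ P i then 1 else 0) := by
      intro i
      rw [List.filter_cons]
      by_cases h : a ∈ P i <;> simp [h]
    simp only [key, Finset.sum_add_distrib, ih]
    obtain ⟨i₀, hi₀⟩ := hcov a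
    have : (∑ i : Fin m, if a ∈ P i then 1 else 0) = 1 := by
      rw [Finset.sum_eq_single i₀]
      · simp [hi₀]
      · intro j _ hj
        have := hdisj j i₀ hj
        simp only [ite_eq_right_iff]
        intro haj
        exact absurd (Finset.mem_inter.mpr ⟨haj, hi₀⟩) (by simp [Finset.disjoint_iff_inter_eq_empty.mp this])
      · simp
    simp [this]

/-- Here a vector `X ∈ {+1, 0, -1}^n` is modelled as `X : Fin n → Option Bool`, with
`some true` standing for `+1`, `some false` for `-1`, and `none` for `0`. -/
theorem stmt9 (n m k : ℕ) (hn : 1 ≤ n) (hm : 1 ≤ m) (hk : 1 ≤ k)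
    (P : Fin m → Finset (Fin n)) (hP : IsPartition n m P)
    (hPconsec : ∀ i, ∀ x ∈ P i, ∀ y ∈ P i, ∀ z : Fin n, x ≤ z → z ≤ y → z ∈ P i)
    (s : Fin m → ℕ) (hs : ∀ i, 1 ≤ s i) (hks : k ≤ ∑ i, s i)
    (X : Fin n → Option Bool) (hX0 : ∃ a, X a ≠ none)
    (halt : Mrpi n m 2 k P s ≤ altVecI n X) :
    ∃ A ∈ multiKneserVerts n m k P s,
      (∀ a ∈ A, X a = some true) ∨ ∀ a ∈ A, X a = some false := by
  classical
  obtain ⟨hPne, hPdisj, hPcov⟩ := hP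
  -- Step 1: an alternating list of maximal length
  have hAltNe : {k | ∃ l : List (Fin n), IsAltList n X l ∧ l.length = k}.Nonempty :=
    ⟨0, [], ⟨List.isChain_nil, by simp, List.isChain_nil⟩, rfl⟩
  have hAltBdd : BddAbove {k | ∃ l : List (Fin n), IsAltList n X l ∧ l.length = k} := by
    refine ⟨n, ?_⟩
    rintro q ⟨l, ⟨hlt, -, -⟩, rfl⟩
    have hnd : l.Nodup :=
      (List.isChain_iff_pairwise.mp hlt).imp (fun h => ne_of_lt h)
    calc l.length ≤ Fintype.card (Fin n) := hnd.length_le_card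
      _ = n := Fintype.card_fin n
  obtain ⟨l, hAlt, hLen⟩ := Nat.sSup_mem hAltNe hAltBdd
  obtain ⟨hlt, hnz, hchain⟩ := hAlt
  have hnd : l.Nodup :=
    (List.isChain_iff_pairwise.mp hlt).imp (fun h => ne_of_lt h)
  have hML : Mrpi n m 2 k P s ≤ l.length := by
    rw [hLen]; exact halt
  -- abbreviations
  set f : Fin m → ℕ := frpi n m 2 P s with hf
  set r : Fin m → ℕ := fun i => (l.filter (fun a => decide (a ∈ P i))).length with hr
  set cnt : Bool → Fin m → ℕ := fun b i =>
    (l.filter (fun a => decide (a ∈ P i))).countP (fun a => X a = some b) with hcnt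
  -- per-block facts
  have hblock : ∀ i : Fin m, r i / 2 ≤ cnt true i ∧ r i / 2 ≤ cnt false i ∧
      cnt true i + cnt false i = r i := by
    intro i
    have hconv : ∀ x y z : Fin n,
        decide (x ∈ P i) → decide (y ∈ P i) → x ≤ z → z ≤ y → decide (z ∈ P i) := by
      intro x y z hx hy hxz hzy
      simp only [decide_eq_true_eq] at *
      exact hPconsec i x hx y hy z hxz hzy
    have hch := chain'_filter_convex hconv l hlt hchain
    have hnz' : ∀ a ∈ l.filter (fun a => decide (a ∈ P i)), X a ≠ none :=
      fun a ha => hnz a (List.mem_of_mem_filter ha)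
    exact alt_counts X _ hch hnz'
  have hrP : ∀ i, r i ≤ (P i).card := by
    intro i
    have hnd' : (l.filter (fun a => decide (a ∈ P i))).Nodup := hnd.filter _
    have hsub : (l.filter (fun a => decide (a ∈ P i))).toFinset ⊆ P i := by
      intro a ha
      rw [List.mem_toFinset, List.mem_filter] at ha
      exact of_decide_eq_true ha.2
    calc r i = (l.filter (fun a => decide (a ∈ P i))).toFinset.card :=
          (List.toFinset_card_of_nodup hnd').symm
      _ ≤ (P i).card := Finset.card_le_card hsub
  have hrsum : ∑ i, r i = l.length := sum_length_filter P hPdisj hPcov l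
  -- frpi case facts
  have hfle : ∀ i, f i ≤ (P i).card := by
    intro i
    rw [hf]; unfold frpi
    split <;> omega
  have hfcases : ∀ i, (f i = 2 * s i ∧ 2 * s i ≤ (P i).card) ∨
      (f i = (P i).card ∧ (P i).card < 2 * s i) := by
    intro i
    rw [hf]; unfold frpi
    split <;> [left; right] <;> omega
  -- Step 2: the key inequality
  have hkey : 2 * k - 1 ≤ ∑ i, min (r i) (2 * s i) := by
    by_contra hcon
    push_neg at hcon
    set S : Finset (Fin m) := Finset.univ.filter (fun i => f i < r i) with hS
    have hSmin : ∀ i ∈ S, f i = min (r i) (2 * s i) := by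
      intro i hi
      rw [hS, Finset.mem_filter] at hi
      rcases hfcases i with ⟨h1, h2⟩ | ⟨h1, h2⟩
      · have := hrP i; omega
      · have := hrP i; omega
    have hSsum : ∑ i ∈ S, f i ≤ 2 * k - 1 := by
      calc ∑ i ∈ S, f i = ∑ i ∈ S, min (r i) (2 * s i) :=
            Finset.sum_congr rfl hSmin
        _ ≤ ∑ i, min (r i) (2 * s i) :=
            Finset.sum_le_sum_of_subset (Finset.subset_univ S)
        _ ≤ 2 * k - 1 := by omega
    have hMbdd : BddAbove {v | ∃ S : Finset (Fin m),
        (∑ i ∈ S, frpi n m 2 P s i) ≤ 2 * k - 1 ∧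
        v = 2 * k - 1 + ∑ i ∈ S, ((P i).card - frpi n m 2 P s i)} := by
      refine ⟨2 * k - 1 + ∑ i, (P i).card, ?_⟩
      rintro v ⟨T, -, rfl⟩
      have : ∑ i ∈ T, ((P i).card - frpi n m 2 P s i) ≤ ∑ i, (P i).card :=
        le_trans (Finset.sum_le_sum (fun i _ => Nat.sub_le _ _))
          (Finset.sum_le_sum_of_subset (Finset.subset_univ T))
      omega
    have hvmem : (2 * k - 1 + ∑ i ∈ S, ((P i).card - f i)) ∈ {v | ∃ S : Finset (Fin m),
        (∑ i ∈ S, frpi n m 2 P s i) ≤ 2 * k - 1 ∧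
        v = 2 * k - 1 + ∑ i ∈ S, ((P i).card - frpi n m 2 P s i)} := ⟨S, hSsum, rfl⟩
    have hvM : 2 * k - 1 + ∑ i ∈ S, ((P i).card - f i) ≤ Mrpi n m 2 k P s :=
      le_csSup hMbdd hvmem
    -- upper bound on l.length
    have hub : l.length ≤ (∑ i ∈ S, ((P i).card - f i)) + ∑ i, min (r i) (2 * s i) := by
      rw [← hrsum]
      have hper : ∀ i : Fin m, r i ≤ (if f i < r i then (P i).card - f i else 0)
          + min (r i) (2 * s i) := by
        intro i
        have h1 := hrP i
        have h2 := hfle i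
        rcases hfcases i with ⟨h3, h4⟩ | ⟨h3, h4⟩ <;> split <;> omega
      calc ∑ i, r i ≤ ∑ i, ((if f i < r i then (P i).card - f i else 0)
            + min (r i) (2 * s i)) := Finset.sum_le_sum (fun i _ => hper i)
        _ = (∑ i, if f i < r i then (P i).card - f i else 0)
            + ∑ i, min (r i) (2 * s i) := Finset.sum_add_distrib
        _ = (∑ i ∈ S, ((P i).card - f i)) + ∑ i, min (r i) (2 * s i) := by
            rw [hS, Finset.sum_filter]
    have : 2 * k - 1 + ∑ i ∈ S, ((P i).card - f i) ≤
        (∑ i ∈ S, ((P i).card - f i)) + ∑ i, min (r i) (2 * s i) :=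
      le_trans (le_trans hvM hML) hub
    omega
  -- Step 3: one of the two signs gives at least k elements
  have hmm : ∀ i : Fin m, min (r i) (2 * s i) ≤
      min (cnt true i) (s i) + min (cnt false i) (s i) := by
    intro i
    obtain ⟨h1, h2, h3⟩ := hblock i
    omega
  have hsum2 : 2 * k - 1 ≤ (∑ i, min (cnt true i) (s i)) + ∑ i, min (cnt false i) (s i) := by
    calc 2 * k - 1 ≤ ∑ i, min (r i) (2 * s i) := hkey
      _ ≤ ∑ i, (min (cnt true i) (s i) + min (cnt false i) (s i)) :=
          Finset.sum_le_sum (fun i _ => hmm i)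
      _ = _ := Finset.sum_add_distrib
  have hsign : k ≤ ∑ i, min (cnt true i) (s i) ∨ k ≤ ∑ i, min (cnt false i) (s i) := by
    omega
  -- Step 4: build the vertex
  have build : ∀ b : Bool, k ≤ ∑ i, min (cnt b i) (s i) →
      ∃ A ∈ multiKneserVerts n m k P s, ∀ a ∈ A, X a = some b := by
    intro b hb
    set T : Fin m → Finset (Fin n) := fun i =>
      ((l.filter (fun a => decide (a ∈ P i))).filter (fun a => X a = some b)).toFinset
      with hT
    have hTcard : ∀ i, (T i).card = cnt b i := by
      intro i
      rw [hT]
      have : ((l.filter (fun a => decide (a ∈ P i))).filter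
          (fun a => X a = some b)).Nodup := (hnd.filter _).filter _
      rw [List.toFinset_card_of_nodup this, ← List.countP_eq_length_filter]
    have hTP : ∀ i, T i ⊆ P i := by
      intro i a ha
      rw [hT, List.mem_toFinset, List.mem_filter, List.mem_filter] at ha
      exact of_decide_eq_true ha.1.2
    have hTX : ∀ i, ∀ a ∈ T i, X a = some b := by
      intro i a ha
      rw [hT, List.mem_toFinset, List.mem_filter] at ha
      exact of_decide_eq_true ha.2
    have hchoose : ∀ i : Fin m, ∃ B ⊆ T i, B.card = min (cnt b i) (s i) := by
      intro i
      exact Finset.exists_subset_card_eq (by rw [hTcard]; exact min_le_left _ _)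
    choose A hA1 hA2 using hchoose
    have hAdisj : ∀ i ∈ (Finset.univ : Finset (Fin m)), ∀ j ∈ Finset.univ, i ≠ j →
        Disjoint (A i) (A j) := by
      intro i _ j _ hij
      exact Finset.disjoint_of_subset_left ((hA1 i).trans (hTP i))
        (Finset.disjoint_of_subset_right ((hA1 j).trans (hTP j)) (hPdisj i j hij))
    have hcardU : (Finset.univ.biUnion A).card = ∑ i, min (cnt b i) (s i) := by
      rw [Finset.card_biUnion hAdisj]
      exact Finset.sum_congr rfl (fun i _ => hA2 i)
    obtain ⟨B, hBsub, hBcard⟩ :=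
      Finset.exists_subset_card_eq (show k ≤ (Finset.univ.biUnion A).card by omega)
    refine ⟨B, ?_, ?_⟩
    · rw [multiKneserVerts, Finset.mem_filter]
      refine ⟨Finset.mem_univ _, hBcard, ?_⟩
      intro i
      have hsub : B ∩ P i ⊆ A i := by
        intro x hx
        rw [Finset.mem_inter] at hx
        obtain ⟨j, -, hj⟩ := Finset.mem_biUnion.mp (hBsub hx.1)
        rcases eq_or_ne j i with rfl | hji
        · exact hj
        · exact absurd (Finset.mem_inter.mpr ⟨(hA1 j).trans (hTP j) hj, hx.2⟩)
            (by simp [Finset.disjoint_iff_inter_eq_empty.mp (hPdisj j i hji)])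
      calc (B ∩ P i).card ≤ (A i).card := Finset.card_le_card hsub
        _ = min (cnt b i) (s i) := hA2 i
        _ ≤ s i := min_le_right _ _
    · intro a ha
      obtain ⟨j, -, hj⟩ := Finset.mem_biUnion.mp (hBsub ha)
      exact hTX j a (hA1 j hj)
  rcases hsign with h | h
  · obtain ⟨A, hA, hAX⟩ := build true h
    exact ⟨A, hA, Or.inl hAX⟩
  · obtain ⟨A, hA, hAX⟩ := build false h
    exact ⟨A, hA, Or.inr hAX⟩
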